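/- In the unbounded forecasting game, Reality can strongly comply with the event: ∑_n v_n/n² < ∞ if and only if (1/n)∑_{i=1}^n (x_i - m_i) → 0. -/

import Mathlib

open Filter Finset

/-- Capital process in the unbounded forecasting game, initial capital 1. -/
def capitalU (m v M V x : ℕ → ℝ) : ℕ → ℝ
  | 0 => 1
  | n + 1 => capitalU m v M V x n + M n * (x n - m n) +
      V n * ((x n - m n) ^ 2 - v n)

noncomputable def Ssum (e : ℕ → ℝ) (n : ℕ) : ℝ := ∑ k ∈ Finset.range n, e k

noncomputable def Kcap (v M V e : ℕ → ℝ) (n : ℕ) : ℝ :=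
  1 + ∑ k ∈ Finset.range n, (M k * e k + V k * (e k ^ 2 - v k))

noncomputable def Psum (v : ℕ → ℝ) (n : ℕ) : ℝ :=
  ∑ k ∈ Finset.range n, v k / ((k : ℝ) + 1) ^ 2

open Classical in
noncomputable def cnt (e : ℕ → ℝ) (n : ℕ) : ℕ :=
  ((Finset.range n).filter fun k => e k ≠ 0).card

open Classical in
noncomputable def sgn (M : ℕ → ℝ) (n : ℕ) : ℝ := if 0 < M n then -1 else 1

def Cond (v M V e : ℕ → ℝ) (n : ℕ) : Prop :=
  ((cnt e n : ℝ) + 1 ≤ Psum v n) ∧ (4 * (|Ssum e n| + 1) ≤ (n : ℝ) + 1) ∧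
    (M n * (sgn M n * ((n : ℝ) + 1)) + V n * (((n : ℝ) + 1) ^ 2 - v n)
      ≤ 1 - Kcap v M V e n)

open Classical in
noncomputable def eAux (v M V : ℕ → ℝ) (n : ℕ) : ℝ :=
  if Cond v M V (fun k => if h : k < n then eAux v M V k else 0) n
  then sgn M n * ((n : ℝ) + 1) else 0
termination_by n

lemma Ssum_congr {e e' : ℕ → ℝ} {n : ℕ} (h : ∀ k < n, e k = e' k) :
    Ssum e n = Ssum e' n :=
  Finset.sum_congr rfl fun k hk => h k (Finset.mem_range.mp hk)

lemma Kcap_congr {v M V e e' : ℕ → ℝ} {n : ℕ} (h : ∀ k < n, e k = e' k) :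
    Kcap v M V e n = Kcap v M V e' n := by
  unfold Kcap
  exact congrArg _ (Finset.sum_congr rfl fun k hk => by rw [h k (Finset.mem_range.mp hk)])

lemma cnt_congr {e e' : ℕ → ℝ} {n : ℕ} (h : ∀ k < n, e k = e' k) :
    cnt e n = cnt e' n := by
  unfold cnt
  congr 1
  exact Finset.filter_congr fun k hk => by rw [h k (Finset.mem_range.mp hk)]

lemma Cond_congr {v M V e e' : ℕ → ℝ} {n : ℕ} (h : ∀ k < n, e k = e' k) :
    Cond v M V e n ↔ Cond v M V e' n := by
  unfold Cond
  rw [Ssum_congr h, Kcap_congr h, cnt_congr h]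

open Classical in
lemma eAux_eq (v M V : ℕ → ℝ) (n : ℕ) :
    eAux v M V n = if Cond v M V (eAux v M V) n then sgn M n * ((n : ℝ) + 1) else 0 := by
  rw [eAux]
  congr 1
  · exact propext (Cond_congr fun k hk => dif_pos hk)

lemma sgn_sq (M : ℕ → ℝ) (n : ℕ) : sgn M n ^ 2 = 1 := by
  unfold sgn; split <;> norm_num

lemma sgn_mul_nonpos (M : ℕ → ℝ) (n : ℕ) {c : ℝ} (hc : 0 ≤ c) :
    M n * (sgn M n * c) ≤ 0 := by
  unfold sgn; split
  · next h => nlinarith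
  · next h => push_neg at h; nlinarith

lemma Kcap_succ (v M V e : ℕ → ℝ) (n : ℕ) :
    Kcap v M V e (n + 1) = Kcap v M V e n + (M n * e n + V n * (e n ^ 2 - v n)) := by
  unfold Kcap; rw [Finset.sum_range_succ]; ring

lemma Ssum_succ (e : ℕ → ℝ) (n : ℕ) : Ssum e (n + 1) = Ssum e n + e n := by
  unfold Ssum; rw [Finset.sum_range_succ]

lemma Psum_succ (v : ℕ → ℝ) (n : ℕ) :
    Psum v (n + 1) = Psum v n + v n / ((n : ℝ) + 1) ^ 2 := by
  unfold Psum; rw [Finset.sum_range_succ]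

lemma Psum_mono {v : ℕ → ℝ} (hv : ∀ n, 0 ≤ v n) : Monotone (Psum v) := by
  apply monotone_nat_of_le_succ
  intro n
  rw [Psum_succ]
  have : 0 ≤ v n / ((n : ℝ) + 1) ^ 2 := div_nonneg (hv n) (by positivity)
  linarith

open Classical in
lemma cnt_succ (e : ℕ → ℝ) (n : ℕ) :
    cnt e (n + 1) = cnt e n + (if e n ≠ 0 then 1 else 0) := by
  unfold cnt
  rw [Finset.range_add_one, Finset.filter_insert]
  split
  · rw [Finset.card_insert_of_notMem (by simp)]
  · simp

lemma cnt_mono {e : ℕ → ℝ} : Monotone (cnt e) := by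
  apply monotone_nat_of_le_succ
  intro n
  rw [cnt_succ]
  split <;> omega

lemma eAux_spike {v M V : ℕ → ℝ} {n : ℕ} (h : Cond v M V (eAux v M V) n) :
    eAux v M V n = sgn M n * ((n : ℝ) + 1) := by
  rw [eAux_eq, if_pos h]

lemma eAux_nospike {v M V : ℕ → ℝ} {n : ℕ} (h : ¬ Cond v M V (eAux v M V) n) :
    eAux v M V n = 0 := by
  rw [eAux_eq, if_neg h]

lemma spike_iff (v M V : ℕ → ℝ) (n : ℕ) :
    eAux v M V n ≠ 0 ↔ Cond v M V (eAux v M V) n := by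
  constructor
  · intro h
    by_contra hc
    exact h (eAux_nospike hc)
  · intro h
    rw [eAux_spike h]
    have h1 : sgn M n ^ 2 = 1 := sgn_sq M n
    intro h0
    have hpos : (0 : ℝ) < (n : ℝ) + 1 := by positivity
    rcases mul_eq_zero.mp h0 with hs | hn
    · rw [hs] at h1; norm_num at h1
    · exact absurd hn (ne_of_gt hpos)

lemma capital_eq (m v M V : ℕ → ℝ) (n : ℕ) :
    capitalU m v M V (fun k => m k + eAux v M V k) n = Kcap v M V (eAux v M V) n := by
  induction n with
  | zero => unfold capitalU Kcap; simp
  | succ n ih =>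
      rw [Kcap_succ]
      show capitalU m v M V _ n + _ + _ = _
      rw [ih]
      ring_nf

lemma Kcap_zero (v M V e : ℕ → ℝ) : Kcap v M V e 0 = 1 := by
  unfold Kcap; simp

lemma eAux_sq_spike {v M V : ℕ → ℝ} {n : ℕ} (h : Cond v M V (eAux v M V) n) :
    eAux v M V n ^ 2 = ((n : ℝ) + 1) ^ 2 := by
  rw [eAux_spike h, mul_pow, sgn_sq, one_mul]

lemma Kcap_le_one (v M V : ℕ → ℝ) (hv : ∀ n, 0 ≤ v n) (hV : ∀ n, 0 ≤ V n) :
    ∀ n, Kcap v M V (eAux v M V) n ≤ 1 := by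
  intro n
  induction n with
  | zero => rw [Kcap_zero]
  | succ n ih =>
      rw [Kcap_succ]
      by_cases h : Cond v M V (eAux v M V) n
      · have h3 := h.2.2
        rw [eAux_spike h]
        have hsq : (sgn M n * ((n : ℝ) + 1)) ^ 2 = ((n : ℝ) + 1) ^ 2 := by
          rw [mul_pow, sgn_sq, one_mul]
        rw [hsq]
        linarith
      · rw [eAux_nospike h]
        have : 0 ≤ V n * v n := mul_nonneg (hV n) (hv n)
        nlinarith

lemma Kcap_succ_nospike {v M V : ℕ → ℝ} {n : ℕ} (h : ¬ Cond v M V (eAux v M V) n) :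
    Kcap v M V (eAux v M V) (n + 1) = Kcap v M V (eAux v M V) n - V n * v n := by
  rw [Kcap_succ, eAux_nospike h]
  ring

lemma cnt_bound (v M V : ℕ → ℝ) (hv : ∀ n, 0 ≤ v n)
    (hS : Summable fun n => v n / ((n : ℝ) + 1) ^ 2) :
    ∀ n, (cnt (eAux v M V) n : ℝ) ≤ ∑' n, v n / ((n : ℝ) + 1) ^ 2 := by
  have hT0 : 0 ≤ ∑' n, v n / ((n : ℝ) + 1) ^ 2 :=
    tsum_nonneg fun n => div_nonneg (hv n) (by positivity)
  have hP : ∀ n, Psum v n ≤ ∑' n, v n / ((n : ℝ) + 1) ^ 2 := fun n =>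
    hS.sum_le_tsum _ (fun i _ => div_nonneg (hv i) (by positivity))
  intro n
  induction n with
  | zero => simpa [cnt]
  | succ n ih =>
      rw [cnt_succ]
      by_cases h : eAux v M V n ≠ 0
      · have hc := ((spike_iff v M V n).mp h).1
        have := hP n
        rw [if_pos h]
        push_cast
        linarith
      · rw [if_neg h]
        simpa using ih

lemma eventually_zero (v M V : ℕ → ℝ) (hv : ∀ n, 0 ≤ v n)
    (hS : Summable fun n => v n / ((n : ℝ) + 1) ^ 2) :
    ∃ N, ∀ n ≥ N, eAux v M V n = 0 := by
  by_contra hcon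
  push_neg at hcon
  have grow : ∀ j : ℕ, ∃ n, j ≤ cnt (eAux v M V) n := by
    intro j
    induction j with
    | zero => exact ⟨0, Nat.zero_le _⟩
    | succ j ih =>
        obtain ⟨n, hn⟩ := ih
        obtain ⟨s, hs, hne⟩ := hcon n
        refine ⟨s + 1, ?_⟩
        rw [cnt_succ, if_pos hne]
        have := cnt_mono (e := eAux v M V) hs
        omega
  obtain ⟨n, hn⟩ := grow (Nat.ceil (∑' n, v n / ((n : ℝ) + 1) ^ 2) + 1)
  have hb := cnt_bound v M V hv hS n
  have hceil : (∑' n, v n / ((n : ℝ) + 1) ^ 2) ≤ (Nat.ceil (∑' n, v n / ((n : ℝ) + 1) ^ 2) : ℝ) :=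
    Nat.le_ceil _
  have : ((Nat.ceil (∑' n, v n / ((n : ℝ) + 1) ^ 2) + 1 : ℕ) : ℝ) ≤ (cnt (eAux v M V) n : ℝ) := by
    exact_mod_cast hn
  push_cast at this
  linarith

lemma tendsto_of_eventually_zero {e : ℕ → ℝ} (N : ℕ) (h : ∀ n ≥ N, e n = 0) :
    Tendsto (fun n => Ssum e n / (n : ℝ)) atTop (nhds 0) := by
  have hfr : ∀ n, n ≥ N → Ssum e n = Ssum e N := by
    intro n hn
    induction n, hn using Nat.le_induction with
    | base => rfl
    | succ n hn ih => rw [Ssum_succ, h n hn, add_zero, ih]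
  have hmain : Tendsto (fun n : ℕ => Ssum e N / (n : ℝ)) atTop (nhds 0) :=
    tendsto_const_div_atTop_nhds_zero_nat _
  apply hmain.congr'
  filter_upwards [eventually_ge_atTop N] with n hn
  rw [hfr n hn]

lemma Psum_tendsto (v : ℕ → ℝ) (hv : ∀ n, 0 ≤ v n)
    (hNS : ¬ Summable fun n => v n / ((n : ℝ) + 1) ^ 2) :
    Tendsto (fun n => Psum v n) atTop atTop := by
  have ha : ∀ n, 0 ≤ v n / ((n : ℝ) + 1) ^ 2 := fun n => div_nonneg (hv n) (by positivity)
  exact (not_summable_iff_tendsto_nat_atTop_of_nonneg ha).mp hNS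

lemma infinitely_many_spikes (v M V : ℕ → ℝ) (hv : ∀ n, 0 ≤ v n) (hV : ∀ n, 0 ≤ V n)
    (hK : ∀ n, 0 ≤ Kcap v M V (eAux v M V) n)
    (hNS : ¬ Summable fun n => v n / ((n : ℝ) + 1) ^ 2) :
    ∀ N, ∃ n ≥ N, eAux v M V n ≠ 0 := by
  have ha : ∀ n, 0 ≤ v n / ((n : ℝ) + 1) ^ 2 := fun n => div_nonneg (hv n) (by positivity)
  have hPtop := Psum_tendsto v hv hNS
  by_contra hcon
  push_neg at hcon
  obtain ⟨N₀, hN₀⟩ := hcon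
  -- frozen sums and counts
  have hSfr : ∀ n ≥ N₀, Ssum (eAux v M V) n = Ssum (eAux v M V) N₀ := by
    intro n hn
    induction n, hn using Nat.le_induction with
    | base => rfl
    | succ n hn ih => rw [Ssum_succ, hN₀ n hn, add_zero, ih]
  have hcfr : ∀ n ≥ N₀, cnt (eAux v M V) n = cnt (eAux v M V) N₀ := by
    intro n hn
    induction n, hn using Nat.le_induction with
    | base => rfl
    | succ n hn ih =>
        rw [cnt_succ, ih]
        simp [hN₀ n hn]
  -- choose N₁
  obtain ⟨N₂, hN₂⟩ := (hPtop.eventually_ge_atTop ((cnt (eAux v M V) N₀ : ℝ) + 1)).exists_forall_of_atTop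
  set N₁ := max (max N₀ N₂) (Nat.ceil (4 * (|Ssum (eAux v M V) N₀| + 1))) with hN₁def
  have hN₁₀ : N₀ ≤ N₁ := le_trans (le_max_left _ _) (le_max_left _ _)
  have hN₁₂ : N₂ ≤ N₁ := le_trans (le_max_right _ _) (le_max_left _ _)
  -- condition (iii) fails for n ≥ N₁
  have hfail : ∀ n ≥ N₁, 1 - Kcap v M V (eAux v M V) n <
      V n * (((n : ℝ) + 1) ^ 2) - V n * v n := by
    intro n hn
    have hn₀ : N₀ ≤ n := le_trans hN₁₀ hn
    have hnc : ¬ Cond v M V (eAux v M V) n := by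
      intro h
      exact (spike_iff v M V n).mpr h (hN₀ n hn₀)
    have hA : (cnt (eAux v M V) n : ℝ) + 1 ≤ Psum v n := by
      rw [hcfr n hn₀]
      exact hN₂ n (le_trans hN₁₂ hn)
    have hB : 4 * (|Ssum (eAux v M V) n| + 1) ≤ (n : ℝ) + 1 := by
      rw [hSfr n hn₀]
      have h1 : 4 * (|Ssum (eAux v M V) N₀| + 1) ≤
          (Nat.ceil (4 * (|Ssum (eAux v M V) N₀| + 1)) : ℝ) := Nat.le_ceil _
      have h2 : (Nat.ceil (4 * (|Ssum (eAux v M V) N₀| + 1)) : ℝ) ≤ (n : ℝ) := by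
        have : Nat.ceil (4 * (|Ssum (eAux v M V) N₀| + 1)) ≤ n :=
          le_trans (le_max_right _ _) hn
        exact_mod_cast this
      linarith
    have hC : ¬ (M n * (sgn M n * ((n : ℝ) + 1)) + V n * (((n : ℝ) + 1) ^ 2 - v n)
        ≤ 1 - Kcap v M V (eAux v M V) n) := by
      intro h
      exact hnc ⟨hA, hB, h⟩
    push_neg at hC
    have hM : M n * (sgn M n * ((n : ℝ) + 1)) ≤ 0 :=
      sgn_mul_nonpos M n (by positivity)
    nlinarith [hC]
  -- capital recursion in frozen region
  have hbrec : ∀ n ≥ N₀, Kcap v M V (eAux v M V) (n + 1)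
      = Kcap v M V (eAux v M V) n - V n * v n := by
    intro n hn
    rw [Kcap_succ, hN₀ n hn]
    ring
  have hb0 : ∀ n, 0 ≤ 1 - Kcap v M V (eAux v M V) n := fun n => by
    have := Kcap_le_one v M V hv hV n; linarith
  have hb1 : ∀ n, 1 - Kcap v M V (eAux v M V) n ≤ 1 := fun n => by
    have := hK n; linarith
  by_cases hall : ∀ n ≥ N₁, 1 - Kcap v M V (eAux v M V) n = 0
  · -- v n = 0 for all n ≥ N₁, contradicting divergence
    have hv0 : ∀ n ≥ N₁, v n = 0 := by
      intro n hn
      have h1 := hfail n hn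
      rw [hall n hn] at h1
      have h2 : 1 - Kcap v M V (eAux v M V) (n + 1) = 0 := hall (n + 1) (le_trans hn (Nat.le_succ n))
      have h3 : V n * v n = 0 := by
        have := hbrec n (le_trans hN₁₀ hn)
        have e1 := hall n hn
        rw [this] at h2
        linarith
      have hVpos : 0 < V n := by nlinarith [sq_nonneg ((n : ℝ) + 1)]
      nlinarith [hv n]
    have hPfr : ∀ n ≥ N₁, Psum v n = Psum v N₁ := by
      intro n hn
      induction n, hn using Nat.le_induction with
      | base => rfl
      | succ n hn ih => rw [Psum_succ, hv0 n hn, ih]; simp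
    obtain ⟨n, hn1, hn2⟩ := ((hPtop.eventually_ge_atTop (Psum v N₁ + 1)).and
      (eventually_ge_atTop N₁)).exists
    rw [hPfr n hn2] at hn1
    linarith
  · push_neg at hall
    obtain ⟨n₂, hn₂N, hn₂⟩ := hall
    have hβ : 0 < 1 - Kcap v M V (eAux v M V) n₂ := lt_of_le_of_ne (hb0 n₂) (Ne.symm hn₂)
    set β := 1 - Kcap v M V (eAux v M V) n₂ with hβdef
    have hmono : ∀ n ≥ n₂, β ≤ 1 - Kcap v M V (eAux v M V) n := by
      intro n hn
      induction n, hn using Nat.le_induction with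
      | base => exact le_refl _
      | succ n hn ih =>
          rw [hbrec n (le_trans hN₁₀ (le_trans hn₂N hn))]
          have : 0 ≤ V n * v n := mul_nonneg (hV n) (hv n)
          linarith
    have hgrow : ∀ n ≥ n₂, β * (1 + ∑ k ∈ Finset.Ico n₂ n, v k / ((k : ℝ) + 1) ^ 2)
        ≤ 1 - Kcap v M V (eAux v M V) n := by
      intro n hn
      induction n, hn using Nat.le_induction with
      | base => simp [hβdef]
      | succ n hn ih =>
          have hnN₁ : N₁ ≤ n := le_trans hn₂N hn
          have h1 := hfail n hnN₁
          have h2 : β < V n * ((n : ℝ) + 1) ^ 2 := by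
            have := hmono n hn
            have : 0 ≤ V n * v n := mul_nonneg (hV n) (hv n)
            nlinarith [hmono n hn]
          have hstep : β * (v n / ((n : ℝ) + 1) ^ 2) ≤ V n * v n := by
            have hp : (0 : ℝ) < ((n : ℝ) + 1) ^ 2 := by positivity
            rw [div_eq_mul_inv]
            have hvn := hv n
            have h3 : β * v n ≤ (V n * ((n : ℝ) + 1) ^ 2) * v n :=
              mul_le_mul_of_nonneg_right h2.le hvn
            calc β * (v n * (((n : ℝ) + 1) ^ 2)⁻¹)
                = (β * v n) * (((n : ℝ) + 1) ^ 2)⁻¹ := by ring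
              _ ≤ ((V n * ((n : ℝ) + 1) ^ 2) * v n) * (((n : ℝ) + 1) ^ 2)⁻¹ := by
                  apply mul_le_mul_of_nonneg_right h3 (by positivity)
              _ = V n * v n := by field_simp
          rw [Finset.sum_Ico_succ_top hn]
          rw [hbrec n (le_trans hN₁₀ hnN₁)]
          have hVv : β * (v n / ((n : ℝ) + 1) ^ 2) ≤ V n * v n := hstep
          nlinarith [hVv, ih]
    -- get contradiction from unboundedness
    obtain ⟨n₃, hn₃1, hn₃2⟩ := ((hPtop.eventually_ge_atTop (Psum v n₂ + 1 / β)).and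
      (eventually_ge_atTop n₂)).exists
    have hsplit : ∑ k ∈ Finset.Ico n₂ n₃, v k / ((k : ℝ) + 1) ^ 2 = Psum v n₃ - Psum v n₂ := by
      unfold Psum
      rw [← Finset.sum_range_add_sum_Ico _ hn₃2]
      ring
    have hIco : 1 / β ≤ ∑ k ∈ Finset.Ico n₂ n₃, v k / ((k : ℝ) + 1) ^ 2 := by
      rw [hsplit]; linarith
    have := hgrow n₃ hn₃2
    have hfin : β * (1 + 1 / β) ≤ 1 - Kcap v M V (eAux v M V) n₃ := by
      apply le_trans _ this
      apply mul_le_mul_of_nonneg_left _ hβ.le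
      linarith
    have hβinv : β * (1 + 1 / β) = β + 1 := by
      field_simp
    rw [hβinv] at hfin
    have := hb1 n₃
    linarith

lemma abs_sgn (M : ℕ → ℝ) (n : ℕ) : |sgn M n| = 1 := by
  unfold sgn; split <;> norm_num

open Classical in
lemma eAux_congr : ∀ (v v' M M' V V' : ℕ → ℝ) (n : ℕ),
    (∀ k ≤ n, v k = v' k) → (∀ k ≤ n, M k = M' k) → (∀ k ≤ n, V k = V' k) →
    eAux v M V n = eAux v' M' V' n := by
  intro v v' M M' V V' n
  induction n using Nat.strong_induction_on with
  | _ n ih =>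
    intro hv hM hV
    have hE : ∀ k < n, eAux v M V k = eAux v' M' V' k := fun k hk =>
      ih k hk (fun j hj => hv j (le_trans hj hk.le)) (fun j hj => hM j (le_trans hj hk.le))
        (fun j hj => hV j (le_trans hj hk.le))
    have hsgn : sgn M n = sgn M' n := by unfold sgn; rw [hM n le_rfl]
    have hP : Psum v n = Psum v' n := Finset.sum_congr rfl fun k hk => by
      rw [hv k (le_of_lt (Finset.mem_range.mp hk))]
    have hKc : Kcap v M V (eAux v M V) n = Kcap v' M' V' (eAux v' M' V') n := by
      unfold Kcap
      refine congrArg _ (Finset.sum_congr rfl fun k hk => ?_)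
      have hk' := Finset.mem_range.mp hk
      rw [hE k hk', hv k hk'.le, hM k hk'.le, hV k hk'.le]
    have hcond : Cond v M V (eAux v M V) n ↔ Cond v' M' V' (eAux v' M' V') n := by
      unfold Cond
      rw [Ssum_congr hE, cnt_congr hE, hsgn, hP, hKc, hv n le_rfl, hM n le_rfl, hV n le_rfl]
    rw [eAux_eq, eAux_eq, hsgn]
    exact if_congr hcond rfl rfl


/-- In the unbounded forecasting game, Reality can strongly comply with:
`∑ v n / n² < ∞  ↔  (1/n) ∑_{i ≤ n} (x i - m i) → 0`. -/
theorem stmt_7 :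
    ∃ R : (ℕ → ℝ) → (ℕ → ℝ) → (ℕ → ℝ) → (ℕ → ℝ) → ℕ → ℝ,
      (∀ m m' v v' M M' V V' : ℕ → ℝ, ∀ n,
        (∀ k ≤ n, m k = m' k) → (∀ k ≤ n, v k = v' k) →
        (∀ k ≤ n, M k = M' k) → (∀ k ≤ n, V k = V' k) →
        R m v M V n = R m' v' M' V' n) ∧
      ∀ m v M V : ℕ → ℝ, (∀ n, 0 ≤ v n) → (∀ n, 0 ≤ V n) →
        (∀ n, 0 ≤ capitalU m v M V (R m v M V) n) →
          ((Summable (fun n => v n / ((n : ℝ) + 1) ^ 2) ↔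
            Tendsto (fun n => (∑ i ∈ Finset.range n, (R m v M V i - m i)) / (n : ℝ))
              atTop (nhds 0)) ∧
           ∀ n, capitalU m v M V (R m v M V) n ≤ 1) := by
  classical
  refine ⟨fun m v M V n => m n + eAux v M V n, ?_, ?_⟩
  · intro m m' v v' M M' V V' n hm hv hM hV
    simp only
    rw [hm n le_rfl, eAux_congr v v' M M' V V' n hv hM hV]
  · intro m v M V hv hV hK
    have hcap : ∀ n, capitalU m v M V (fun k => m k + eAux v M V k) n
        = Kcap v M V (eAux v M V) n := capital_eq m v M V
    have hK' : ∀ n, 0 ≤ Kcap v M V (eAux v M V) n := by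
      intro n
      rw [← hcap n]
      exact hK n
    have hfeq : (fun n : ℕ => (∑ i ∈ Finset.range n, (m i + eAux v M V i - m i)) / (n : ℝ))
        = fun n : ℕ => Ssum (eAux v M V) n / (n : ℝ) := by
      funext n
      congr 1
      exact Finset.sum_congr rfl fun i _ => by ring
    constructor
    · constructor
      · intro hSumm
        obtain ⟨N, hN⟩ := eventually_zero v M V hv hSumm
        show Tendsto (fun n : ℕ =>
          (∑ i ∈ Finset.range n, (m i + eAux v M V i - m i)) / (n : ℝ)) atTop (nhds 0)
        rw [hfeq]
        exact tendsto_of_eventually_zero N hN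
      · intro hT
        by_contra hNS
        have hT' : Tendsto (fun n : ℕ => Ssum (eAux v M V) n / (n : ℝ)) atTop (nhds 0) := by
          rw [← hfeq]
          exact hT
        obtain ⟨N, hN⟩ := Metric.tendsto_atTop.mp hT' (1 / 2) (by norm_num)
        obtain ⟨n, hn, hne⟩ := infinitely_many_spikes v M V hv hV hK' hNS N
        have hcond := (spike_iff v M V n).mp hne
        have hB := hcond.2.1
        have hpos : (0 : ℝ) < (n : ℝ) + 1 := by positivity
        have hSn1 : Ssum (eAux v M V) (n + 1)
            = Ssum (eAux v M V) n + sgn M n * ((n : ℝ) + 1) := by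
          rw [Ssum_succ, eAux_spike hcond]
        have habs : |sgn M n * ((n : ℝ) + 1)| = (n : ℝ) + 1 := by
          rw [abs_mul, abs_sgn, one_mul, abs_of_pos hpos]
        have hlow : ((n : ℝ) + 1) - |Ssum (eAux v M V) n| ≤ |Ssum (eAux v M V) (n + 1)| := by
          have h1 : |sgn M n * ((n : ℝ) + 1)|
              ≤ |Ssum (eAux v M V) (n + 1)| + |Ssum (eAux v M V) n| := by
            have h2 := abs_add_le (Ssum (eAux v M V) (n + 1)) (-(Ssum (eAux v M V) n))
            rw [hSn1] at h2 ⊢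
            simpa using h2
          rw [habs] at h1
          linarith
        have hq := hN (n + 1) (le_trans hn (Nat.le_succ n))
        rw [Real.dist_eq, sub_zero] at hq
        have hcast : ((n + 1 : ℕ) : ℝ) = (n : ℝ) + 1 := by push_cast; ring
        rw [hcast, abs_div, abs_of_pos hpos] at hq
        have h3 : (3 / 4 : ℝ) * ((n : ℝ) + 1) ≤ |Ssum (eAux v M V) (n + 1)| := by
          have := hB
          linarith [hlow]
        have h4 : (3 / 4 : ℝ) ≤ |Ssum (eAux v M V) (n + 1)| / ((n : ℝ) + 1) :=
          (le_div_iff₀ hpos).mpr (by linarith)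
        linarith
    · intro n
      show capitalU m v M V (fun k => m k + eAux v M V k) n ≤ 1
      rw [hcap n]
      exact Kcap_le_one v M V hv hV n
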